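/- Let (X, ·, ℂ) be a stratified L-convex group, N a normal subgroup of X, and q : X → X/N the quotient homomorphism. Then for every A : X → L, q←(q→(A)) = ⨆_{z ∈ N} (A ∘ R_z), where R_z(x) = xz; consequently q←((q→(A))') = ⨅_{z ∈ N} (A' ∘ R_z), and if A' ∈ ℂ then q←((q→(A))') ∈ ℂ. -/
import Mathlib


variable {L X : Type*}

def IsLConvex [CompleteLattice L] {X : Type*} (𝒞 : Set (X → L)) : Prop :=
  (fun _ => (⊤ : L)) ∈ 𝒞 ∧ (fun _ => (⊥ : L)) ∈ 𝒞 ∧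
  (∀ S : Set (X → L), S ⊆ 𝒞 → sInf S ∈ 𝒞) ∧
  (∀ S : Set (X → L), S ⊆ 𝒞 → DirectedOn (· ≤ ·) S → sSup S ∈ 𝒞)

def IsStratified [CompleteLattice L] {X : Type*} (𝒞 : Set (X → L)) : Prop :=
  ∀ a : L, (fun _ => a) ∈ 𝒞

def fprod [CompleteLattice L] {X Y : Type*} (A : X → L) (B : Y → L) : X × Y → L :=
  fun p => A p.1 ⊓ B p.2

def prodStruct [CompleteLattice L] {X Y : Type*}
    (𝒞 : Set (X → L)) (𝒟 : Set (Y → L)) : Set (X × Y → L) :=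
  {F | ∃ C ∈ 𝒞, ∃ D ∈ 𝒟, F = fprod C D}

def LCP [CompleteLattice L] {X Y : Type*} (f : X → Y)
    (𝒞 : Set (X → L)) (𝔾 : Set (Y → L)) : Prop :=
  ∀ A ∈ 𝔾, (A ∘ f) ∈ 𝒞

def IsLConvexGroup [CompleteLattice L] [Group X] (𝒞 : Set (X → L)) : Prop :=
  LCP (fun p : X × X => p.1 * p.2) (prodStruct 𝒞 𝒞) 𝒞 ∧ LCP (fun x : X => x⁻¹) 𝒞 𝒞

noncomputable def fimage [CompleteLattice L] {X Y : Type*} (f : X → Y) (A : X → L) : Y → L :=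
  fun y => ⨆ (x : X) (_ : f x = y), A x

def fpre [CompleteLattice L] {X Y : Type*} (f : X → Y) (B : Y → L) : X → L := B ∘ f

private lemma c_iSup' {L : Type*} [CompleteLattice L] (c : L → L) (hc : Antitone c)
    (hi : Function.Involutive c) {ι : Sort*} (f : ι → L) :
    c (⨆ i, f i) = ⨅ i, c (f i) := by
  apply le_antisymm
  · exact le_iInf fun i => hc (le_iSup f i)
  · have h1 : (⨆ i, f i) ≤ c (⨅ i, c (f i)) :=
      iSup_le fun i => (hi (f i)) ▸ hc (iInf_le _ i)
    have h2 := hc h1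
    rwa [hi] at h2

theorem quotient_preimage_image [CompletelyDistribLattice L] [Group X]
    (N : Subgroup X) [N.Normal]
    (𝒞 : Set (X → L)) (h : IsLConvex 𝒞) (hs : IsStratified 𝒞)
    (hg : IsLConvexGroup 𝒞)
    (c : L → L) (hcA : Antitone c) (hci : Function.Involutive c)
    (A : X → L) :
    (fpre (QuotientGroup.mk : X → X ⧸ N) (fimage QuotientGroup.mk A) =
      fun x => ⨆ z ∈ (N : Set X), A (x * z)) ∧
    (fpre (QuotientGroup.mk : X → X ⧸ N)
        (fun y => c (fimage (QuotientGroup.mk : X → X ⧸ N) A y)) =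
      fun x => ⨅ z ∈ (N : Set X), c (A (x * z))) ∧
    ((fun u => c (A u)) ∈ 𝒞 →
      fpre (QuotientGroup.mk : X → X ⧸ N)
        (fun y => c (fimage (QuotientGroup.mk : X → X ⧸ N) A y)) ∈ 𝒞) := by
  have key : (fpre (QuotientGroup.mk : X → X ⧸ N) (fimage QuotientGroup.mk A) =
      fun x => ⨆ z ∈ (N : Set X), A (x * z)) := by
    funext x
    simp only [fpre, Function.comp, fimage]
    apply le_antisymm
    · refine iSup_le fun y => iSup_le fun hy => ?_
      have hz : x⁻¹ * y ∈ N := by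
        have := (QuotientGroup.eq (s := N)).1 hy.symm
        exact this
      have : A y = A (x * (x⁻¹ * y)) := by group
      rw [this]
      exact le_iSup₂ (f := fun z (_ : z ∈ (N : Set X)) => A (x * z)) (x⁻¹ * y) hz
    · refine iSup₂_le fun z hz => ?_
      have hq : (QuotientGroup.mk (x * z) : X ⧸ N) = QuotientGroup.mk x := by
        refine (QuotientGroup.eq (s := N)).2 ?_
        have : (x * z)⁻¹ * x = z⁻¹ := by group
        rw [this]; exact N.inv_mem hz
      exact le_iSup₂ (f := fun y (_ : (QuotientGroup.mk y : X ⧸ N) = QuotientGroup.mk x) => A y)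
        (x * z) hq
  have key2 : (fpre (QuotientGroup.mk : X → X ⧸ N)
        (fun y => c (fimage (QuotientGroup.mk : X → X ⧸ N) A y)) =
      fun x => ⨅ z ∈ (N : Set X), c (A (x * z))) := by
    funext x
    have : fimage (QuotientGroup.mk : X → X ⧸ N) A (QuotientGroup.mk x)
        = ⨆ z ∈ (N : Set X), A (x * z) := congrFun key x
    simp only [fpre, Function.comp]
    rw [this, c_iSup' c hcA hci]
    exact iInf_congr fun z => c_iSup' c hcA hci _
  refine ⟨key, key2, fun hA => ?_⟩
  rw [key2]
  obtain ⟨C, hC, D, hD, hCD⟩ := hg.1 _ hA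
  have hpt : ∀ x z : X, c (A (x * z)) = C x ⊓ D z := fun x z => congrFun hCD (x, z)
  set a : L := ⨅ z ∈ (N : Set X), D z with ha
  have heq : (fun x => ⨅ z ∈ (N : Set X), c (A (x * z))) = sInf {C, fun _ => a} := by
    rw [sInf_pair]
    funext x
    simp only [Pi.inf_apply]
    apply le_antisymm
    · refine le_inf ?_ ?_
      · have h1 : (⨅ z ∈ (N : Set X), c (A (x * z))) ≤ c (A (x * 1)) :=
          iInf₂_le 1 N.one_mem
        calc (⨅ z ∈ (N : Set X), c (A (x * z))) ≤ c (A (x * 1)) := h1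
          _ = C x ⊓ D 1 := hpt x 1
          _ ≤ C x := inf_le_left
      · refine le_iInf₂ fun z hz => ?_
        calc (⨅ z ∈ (N : Set X), c (A (x * z))) ≤ c (A (x * z)) := iInf₂_le z hz
          _ = C x ⊓ D z := hpt x z
          _ ≤ D z := inf_le_right
    · refine le_iInf₂ fun z hz => ?_
      rw [hpt x z]
      exact inf_le_inf le_rfl (iInf₂_le z hz)
  rw [heq]
  exact h.2.2.1 _ (by
    rintro f (rfl | rfl)
    · exact hC
    · exact hs a)
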